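/- Let (F, d_F) be a metric space. Define on [0, ∞) × F the function d_C((r,x),(s,y)) = √(r² + s² − 2·r·s·cos(min(d_F(x,y), π))). Then d_C is a pseudometric: it is nonnegative, symmetric, satisfies d_C((r,x),(r,x)) = 0, and satisfies the triangle inequality; moreover d_C((r,x),(s,y)) = 0 if and only if r = s = 0 or (r = s and d_F(x,y) = 0). -/

import Mathlib

private noncomputable def coneF (r t θ : ℝ) : ℝ :=
  Real.sqrt (r ^ 2 + t ^ 2 - 2 * r * t * Real.cos θ)

private lemma coneF_eq_abs (r t θ : ℝ) :
    coneF r t θ = norm ((r : ℂ) - t * Complex.exp (θ * Complex.I)) := by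
  rw [coneF, Complex.norm_def]
  congr 1
  simp [Complex.normSq_apply, Complex.exp_mul_I, Complex.cos_ofReal_re, Complex.sin_ofReal_re]
  nlinarith [Real.sin_sq_add_cos_sq θ]

private lemma coneF_eq_abs' (s t γ β : ℝ) :
    coneF s t β =
      norm ((s : ℂ) * Complex.exp (γ * Complex.I)
        - t * Complex.exp ((γ + β : ℝ) * Complex.I)) := by
  rw [coneF_eq_abs]
  have h : (s : ℂ) * Complex.exp (γ * Complex.I)
      - t * Complex.exp ((γ + β : ℝ) * Complex.I)
      = Complex.exp (γ * Complex.I) * ((s : ℂ) - t * Complex.exp (β * Complex.I)) := by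
    push_cast
    rw [add_mul, Complex.exp_add]
    ring
  rw [h, norm_mul, Complex.norm_exp_ofReal_mul_I, one_mul]

private lemma coneF_mono (r t : ℝ) (hr : 0 ≤ r) (ht : 0 ≤ t) {θ₁ θ₂ : ℝ}
    (h0 : 0 ≤ θ₁) (h12 : θ₁ ≤ θ₂) (hπ : θ₂ ≤ Real.pi) :
    coneF r t θ₁ ≤ coneF r t θ₂ := by
  apply Real.sqrt_le_sqrt
  have := Real.cos_le_cos_of_nonneg_of_le_pi h0 hπ h12
  nlinarith [mul_nonneg hr ht]

private lemma coneF_pi (r t : ℝ) (hr : 0 ≤ r) (ht : 0 ≤ t) :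
    coneF r t Real.pi = r + t := by
  rw [coneF, Real.cos_pi]
  have : r ^ 2 + t ^ 2 - 2 * r * t * (-1) = (r + t) ^ 2 := by ring
  rw [this, Real.sqrt_sq (by linarith)]

private lemma coneF_triangle (r s t α β : ℝ) (hr : 0 ≤ r) (hs : 0 ≤ s) (ht : 0 ≤ t)
    (hα0 : 0 ≤ α) (hαπ : α ≤ Real.pi) (hβ0 : 0 ≤ β) (hβπ : β ≤ Real.pi) :
    coneF r t (min (α + β) Real.pi) ≤ coneF r s α + coneF s t β := by
  by_cases h : α + β ≤ Real.pi
  · rw [min_eq_left h]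
    calc coneF r t (α + β)
        = norm ((r : ℂ) - t * Complex.exp ((α + β : ℝ) * Complex.I)) :=
          coneF_eq_abs r t (α + β)
      _ ≤ norm ((r : ℂ) - s * Complex.exp (α * Complex.I))
          + norm ((s : ℂ) * Complex.exp (α * Complex.I)
              - t * Complex.exp ((α + β : ℝ) * Complex.I)) :=
          norm_sub_le_norm_sub_add_norm_sub _ _ _
      _ = coneF r s α + coneF s t β := by
          rw [← coneF_eq_abs, ← coneF_eq_abs']
  · push_neg at h
    rw [min_eq_right h.le]
    set δ := Real.pi - β with hδ
    have hδβ : δ + β = Real.pi := by rw [hδ]; ring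
    have key : r + t ≤ coneF r s δ + coneF s t β := by
      calc r + t = coneF r t (δ + β) := by rw [hδβ, coneF_pi r t hr ht]
        _ = norm ((r : ℂ) - t * Complex.exp ((δ + β : ℝ) * Complex.I)) :=
            coneF_eq_abs r t (δ + β)
        _ ≤ norm ((r : ℂ) - s * Complex.exp (δ * Complex.I))
            + norm ((s : ℂ) * Complex.exp (δ * Complex.I)
                - t * Complex.exp ((δ + β : ℝ) * Complex.I)) :=
            norm_sub_le_norm_sub_add_norm_sub _ _ _
        _ = coneF r s δ + coneF s t β := by
            rw [← coneF_eq_abs, ← coneF_eq_abs']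
    have mono : coneF r s δ ≤ coneF r s α :=
      coneF_mono r s hr hs (by rw [hδ]; linarith) (by rw [hδ]; linarith) hαπ
    rw [coneF_pi r t hr ht]
    linarith

theorem stmt_10 {F : Type*} [MetricSpace F]
    (dC : ℝ × F → ℝ × F → ℝ)
    (hdC : ∀ p q : ℝ × F, dC p q =
      Real.sqrt (p.1 ^ 2 + q.1 ^ 2
        - 2 * p.1 * q.1 * Real.cos (min (dist p.2 q.2) Real.pi))) :
    (∀ p q : ℝ × F, 0 ≤ p.1 → 0 ≤ q.1 → 0 ≤ dC p q) ∧
    (∀ p q : ℝ × F, dC p q = dC q p) ∧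
    (∀ p : ℝ × F, dC p p = 0) ∧
    (∀ p q z : ℝ × F, 0 ≤ p.1 → 0 ≤ q.1 → 0 ≤ z.1 → dC p z ≤ dC p q + dC q z) ∧
    (∀ p q : ℝ × F, 0 ≤ p.1 → 0 ≤ q.1 →
      (dC p q = 0 ↔ (p.1 = 0 ∧ q.1 = 0) ∨ (p.1 = q.1 ∧ dist p.2 q.2 = 0))) := by
  have hpi : (0 : ℝ) < Real.pi := Real.pi_pos
  have hmin : ∀ (x y : F), 0 ≤ min (dist x y) Real.pi ∧ min (dist x y) Real.pi ≤ Real.pi :=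
    fun x y => ⟨le_min dist_nonneg hpi.le, min_le_right _ _⟩
  refine ⟨?_, ?_, ?_, ?_, ?_⟩
  · intro p q _ _
    rw [hdC]; exact Real.sqrt_nonneg _
  · intro p q
    rw [hdC, hdC, dist_comm]
    ring_nf
  · intro p
    rw [hdC]
    have h0 : min (dist p.2 p.2) Real.pi = 0 := by simp [hpi.le]
    rw [h0, Real.cos_zero]
    have : p.1 ^ 2 + p.1 ^ 2 - 2 * p.1 * p.1 * 1 = 0 := by ring
    rw [this, Real.sqrt_zero]
  · intro p q z hp hq hz
    rw [hdC, hdC, hdC]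
    set α := min (dist p.2 q.2) Real.pi with hα
    set β := min (dist q.2 z.2) Real.pi with hβ
    set γ := min (dist p.2 z.2) Real.pi with hγ
    have hγle : γ ≤ min (α + β) Real.pi := by
      apply le_min _ (min_le_right _ _)
      rcases min_cases (dist p.2 q.2) Real.pi with ⟨h1, _⟩ | ⟨h1, h1'⟩ <;>
        rcases min_cases (dist q.2 z.2) Real.pi with ⟨h2, _⟩ | ⟨h2, h2'⟩
      · exact le_trans (min_le_left _ _) (by rw [hα, hβ, h1, h2]; exact dist_triangle _ _ _)
      · rw [hα, hβ, h1, h2]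
        exact le_trans (min_le_right _ _) (by linarith [dist_nonneg (x := p.2) (y := q.2)])
      · rw [hα, hβ, h1, h2]
        exact le_trans (min_le_right _ _) (by linarith [dist_nonneg (x := q.2) (y := z.2)])
      · rw [hα, hβ, h1, h2]
        exact le_trans (min_le_right _ _) (by linarith)
    have h1 := coneF_mono p.1 z.1 hp hz (hmin p.2 z.2).1 hγle
      (min_le_right _ _)
    have h2 := coneF_triangle p.1 q.1 z.1 α β hp hq hz
      (hmin p.2 q.2).1 (hmin p.2 q.2).2 (hmin q.2 z.2).1 (hmin q.2 z.2).2
    calc Real.sqrt (p.1 ^ 2 + z.1 ^ 2 - 2 * p.1 * z.1 * Real.cos γ)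
        = coneF p.1 z.1 γ := rfl
      _ ≤ coneF p.1 z.1 (min (α + β) Real.pi) := h1
      _ ≤ coneF p.1 q.1 α + coneF q.1 z.1 β := h2
      _ = _ := rfl
  · intro p q hp hq
    rw [hdC]
    set θ := min (dist p.2 q.2) Real.pi with hθ
    have hθ0 : 0 ≤ θ := (hmin p.2 q.2).1
    have hθπ : θ ≤ Real.pi := (hmin p.2 q.2).2
    have hcos1 : Real.cos θ ≤ 1 := Real.cos_le_one θ
    have hD : (p.1 - q.1) ^ 2 ≤ p.1 ^ 2 + q.1 ^ 2 - 2 * p.1 * q.1 * Real.cos θ := by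
      nlinarith [mul_nonneg hp hq]
    constructor
    · intro h
      have hD0 : p.1 ^ 2 + q.1 ^ 2 - 2 * p.1 * q.1 * Real.cos θ ≤ 0 :=
        Real.sqrt_eq_zero'.mp h
      have h3 : (p.1 - q.1) ^ 2 = 0 := le_antisymm (le_trans hD hD0) (sq_nonneg _)
      have h4 : p.1 - q.1 = 0 := by
        have := sq_eq_zero_iff.mp h3
        exact this
      have heq : p.1 = q.1 := by linarith
      by_cases hp0 : p.1 = 0
      · exact Or.inl ⟨hp0, by rw [← heq]; exact hp0⟩
      · have hr2 : 0 < p.1 := lt_of_le_of_ne hp (Ne.symm hp0)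
        have hcosθ : Real.cos θ = 1 := by
          refine le_antisymm hcos1 ?_
          nlinarith [mul_pos hr2 hr2]
        have hθeq : θ = 0 := by
          have h2pi : Real.pi < 2 * Real.pi := by linarith
          exact (Real.cos_eq_one_iff_of_lt_of_lt (by linarith) (by linarith)).mp hcosθ
        refine Or.inr ⟨heq, ?_⟩
        rcases le_or_gt (dist p.2 q.2) Real.pi with hle | hlt
        · rw [hθ, min_eq_left hle] at hθeq; exact hθeq
        · rw [hθ, min_eq_right hlt.le] at hθeq; linarith
    · rintro (⟨h1, h2⟩ | ⟨h1, h2⟩)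
      · rw [h1, h2]; simp
      · have : θ = 0 := by
          rw [hθ, h2]; exact min_eq_left hpi.le
        rw [this, Real.cos_zero, h1]
        have : q.1 ^ 2 + q.1 ^ 2 - 2 * q.1 * q.1 * 1 = 0 := by ring
        rw [this, Real.sqrt_zero]
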